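/- For every word-representable graph G, l(G ∘ K₂) ≤ 2·l(G) + κ_G, where l denotes the minimum length of a word-representant, κ_G is the size of a maximum clique of G, and G ∘ K₂ is the rooted product of G with K₂. -/

import Mathlib

open SimpleGraph

variable {V : Type*}

/-- Two distinct letters `x` and `y` alternate in a word `w` if the subsequence of `w`
consisting of all occurrences of `x` and `y` is strictly alternating. -/
def Alternates [DecidableEq V] (x y : V) (w : List V) : Prop :=
  (w.filter (fun z => decide (z = x ∨ z = y))).Chain' (· ≠ ·)

/-- A word `w` represents the graph `G` if it contains every vertex at least once and
two distinct vertices are adjacent iff they alternate in `w`. -/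
def Represents [DecidableEq V] (G : SimpleGraph V) (w : List V) : Prop :=
  (∀ v : V, v ∈ w) ∧ ∀ x y : V, x ≠ y → (G.Adj x y ↔ Alternates x y w)

/-- A graph is word-representable if some word represents it. -/
def WordRepresentable [DecidableEq V] (G : SimpleGraph V) : Prop :=
  ∃ w : List V, Represents G w

/-- `l(G)`: the minimum length of a word-representant of `G`. -/
noncomputable def reprLen [DecidableEq V] (G : SimpleGraph V) : ℕ :=
  sInf {n | ∃ w : List V, Represents G w ∧ w.length = n}

/-- The rooted product `G ∘ H` with root `r : U`: copies of `H` indexed by `V(G)`,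
with each vertex `u` of `G` identified with the root of the `u`-th copy. -/
def rootedProd {U : Type*} (G : SimpleGraph V) (H : SimpleGraph U) (r : U) :
    SimpleGraph (V × U) where
  Adj p q := (p.1 = q.1 ∧ H.Adj p.2 q.2) ∨ (p.2 = r ∧ q.2 = r ∧ G.Adj p.1 q.1)
  symm := by
    constructor
    intro p q h
    rcases h with ⟨h1, h2⟩ | ⟨h1, h2, h3⟩
    · exact Or.inl ⟨h1.symm, h2.symm⟩
    · exact Or.inr ⟨h2, h1, h3.symm⟩
  loopless := by
    constructor
    intro p h
    rcases h with ⟨_, h2⟩ | ⟨_, _, h3⟩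
    · exact h2.ne rfl
    · exact h3.ne rfl

section RootedProdConstruction

variable [DecidableEq V]

/-- The word representing `G ∘ K₂` built from a word `w` representing `G`: each
occurrence of a letter `v` is kept (as the root letter `(v, 0)`), a pendant letter
`(v, 1)` is inserted before every non-first occurrence of `v`, and additionally after
the last occurrence of `v` (and also before it, in case it is at the same time the
first occurrence).  The accumulator `pre` records the already-processed prefix. -/
def transform (pre : List V) : List V → List (V × Fin 2)
  | [] => []
  | v :: rest =>
      ((if v ∈ pre ∨ v ∉ rest then [((v, 1) : V × Fin 2)] else []) ++ [((v, 0) : V × Fin 2)] ++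
        (if v ∉ rest then [((v, 1) : V × Fin 2)] else [])) ++ transform (pre ++ [v]) rest

lemma mem_transform (v : V) : ∀ (rest pre : List V), v ∈ rest →
    ((v, (0 : Fin 2)) ∈ transform pre rest ∧ (v, (1 : Fin 2)) ∈ transform pre rest) := by
  intro rest
  induction rest with
  | nil => intro pre hv; simp at hv
  | cons y rest ih =>
    intro pre hv
    by_cases hyv : y = v
    · subst hyv
      by_cases hr : y ∈ rest
      · have := ih (pre ++ [y]) hr
        simp only [transform, List.mem_append]
        exact ⟨Or.inl (by simp), Or.inr this.2⟩
      · simp [transform, hr]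
    · have hv' : v ∈ rest := by
        rcases List.mem_cons.mp hv with h | h
        · exact absurd h.symm hyv
        · exact h
      have := ih (pre ++ [y]) hv'
      simp only [transform, List.mem_append]
      exact ⟨Or.inr this.1, Or.inr this.2⟩

lemma fst_mem_of_mem_transform : ∀ (rest pre : List V) (z : V × Fin 2),
    z ∈ transform pre rest → z.1 ∈ rest := by
  intro rest
  induction rest with
  | nil => intro pre z hz; simp [transform] at hz
  | cons y rest ih =>
    intro pre z hz
    simp only [transform, List.mem_append] at hz
    rcases hz with (hz | hz) | hz
    · rcases hz with hz | hz
      · split_ifs at hz <;> simp at hz <;> simp [hz]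
      · simp at hz; simp [hz]
    · split_ifs at hz <;> simp at hz <;> simp [hz]
    · exact List.mem_cons_of_mem _ (ih _ _ hz)

lemma filter_fst_nil (v : V) : ∀ (rest pre : List V), v ∉ rest →
    List.filter (fun z => z.1 == v) (transform pre rest) = [] := by
  intro rest pre h
  rw [List.filter_eq_nil_iff]
  intro z hz
  have := fst_mem_of_mem_transform rest pre z hz
  simp only [beq_iff_eq]
  intro hzv
  exact h (hzv ▸ this)

lemma roots_transform (P : V → Bool) : ∀ (rest pre : List V),
    List.filter (fun z => z.2 == (0 : Fin 2) && P z.1) (transform pre rest)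
      = (rest.filter P).map (fun c => ((c, 0) : V × Fin 2)) := by
  have h10 : (((1 : Fin 2)) == (0 : Fin 2)) = false := by decide
  intro rest
  induction rest with
  | nil => intro pre; simp [transform]
  | cons y rest ih =>
    intro pre
    rw [transform]
    rw [List.filter_append, List.filter_append, List.filter_append, ih]
    cases hPy : P y <;> split_ifs <;> simp [h10, hPy, List.filter_cons]

lemma alt_transform (v : V) : ∀ (rest pre : List V), v ∈ rest →
    List.Chain' (· ≠ ·) (List.filter (fun z => z.1 == v) (transform pre rest)) ∧
    (List.filter (fun z => z.1 == v) (transform pre rest)).head? =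
      some (if v ∈ pre ∨ rest.count v = 1 then ((v, 1) : V × Fin 2) else (v, 0)) := by
  intro rest
  induction rest with
  | nil => intro pre hv; simp at hv
  | cons y rest ih =>
    intro pre hv
    by_cases hyv : y = v
    · subst hyv
      by_cases hr : y ∈ rest
      · have hIH := ih (pre ++ [y]) hr
        have hmem : y ∈ pre ++ [y] := by simp
        rw [if_pos (Or.inl hmem)] at hIH
        have hcount : ¬ ((y :: rest).count y = 1) := by
          have : 0 < rest.count y := List.count_pos_iff.mpr hr
          simp only [List.count_cons_self]
          omega
        by_cases hp : y ∈ pre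
        · have hEq : List.filter (fun z => z.1 == y) (transform pre (y :: rest)) =
              (y, 1) :: (y, 0) ::
                List.filter (fun z => z.1 == y) (transform (pre ++ [y]) rest) := by
            rw [transform, if_pos (Or.inl hp), if_neg (by simpa using hr)]
            simp [List.filter_append, List.filter_cons]
          rw [hEq]
          constructor
          · refine List.isChain_cons.mpr ⟨?_, List.isChain_cons.mpr ⟨?_, hIH.1⟩⟩
            · intro z hz
              simp only [List.head?_cons, Option.mem_def, Option.some.injEq] at hz
              subst hz; simp
            · intro z hz
              rw [hIH.2] at hz
              simp only [Option.mem_def, Option.some.injEq] at hz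
              subst hz; simp
          · rw [if_pos (Or.inl hp)]; simp
        · have hEq : List.filter (fun z => z.1 == y) (transform pre (y :: rest)) =
              (y, 0) :: List.filter (fun z => z.1 == y) (transform (pre ++ [y]) rest) := by
            rw [transform, if_neg (by simpa using ⟨hp, hr⟩), if_neg (by simpa using hr)]
            simp [List.filter_append, List.filter_cons]
          rw [hEq]
          constructor
          · refine List.isChain_cons.mpr ⟨?_, hIH.1⟩
            intro z hz
            rw [hIH.2] at hz
            simp only [Option.mem_def, Option.some.injEq] at hz
            subst hz; simp
          · rw [if_neg (by push_neg; exact ⟨hp, hcount⟩)]; simp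
      · have hnil := filter_fst_nil y rest (pre ++ [y]) hr
        have hEq : List.filter (fun z => z.1 == y) (transform pre (y :: rest)) =
            [((y, 1) : V × Fin 2), (y, 0), (y, 1)] := by
          rw [transform, if_pos (Or.inr hr), if_pos hr]
          simp [List.filter_append, List.filter_cons, hnil]
        rw [hEq]
        constructor
        · exact List.isChain_cons_cons.mpr ⟨by simp, List.isChain_pair.mpr (by simp)⟩
        · have : (y :: rest).count y = 1 := by
            simp [List.count_eq_zero_of_not_mem hr]
          rw [if_pos (Or.inr this)]
          simp
    · have hv' : v ∈ rest := by
        rcases List.mem_cons.mp hv with h | h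
        · exact absurd h.symm hyv
        · exact h
      have hIH := ih (pre ++ [y]) hv'
      have hb : (y == v) = false := by simpa using hyv
      have hskip : List.filter (fun z => z.1 == v) (transform pre (y :: rest)) =
          List.filter (fun z => z.1 == v) (transform (pre ++ [y]) rest) := by
        rw [transform, List.filter_append]
        have : List.filter (fun z : V × Fin 2 => z.1 == v)
            ((if y ∈ pre ∨ y ∉ rest then [((y, 1) : V × Fin 2)] else []) ++
              [((y, 0) : V × Fin 2)] ++
              (if y ∉ rest then [((y, 1) : V × Fin 2)] else [])) = [] := by
          rw [List.filter_eq_nil_iff]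
          intro z hz
          simp only [List.mem_append] at hz
          have hz1 : z.1 = y := by
            rcases hz with (hz | hz) | hz
            · split_ifs at hz <;> simp at hz <;> simp [hz]
            · simp at hz; simp [hz]
            · split_ifs at hz <;> simp at hz <;> simp [hz]
          simp [hz1, hb]
        rw [this, List.nil_append]
      rw [hskip]
      have hiff : (v ∈ pre ++ [y] ∨ List.count v rest = 1) ↔
          (v ∈ pre ∨ List.count v (y :: rest) = 1) := by
        rw [List.count_cons_of_ne hyv]
        simp [List.mem_append, (Ne.symm hyv : v ≠ y)]
      refine ⟨hIH.1, ?_⟩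
      rw [hIH.2]
      exact congrArg some (if_congr hiff rfl rfl)

lemma kill_transform (v : V) (P : V × Fin 2 → Bool) (h1 : P (v, 1) = true)
    (h0 : P (v, 0) = false) : ∀ (rest pre : List V), v ∈ rest →
    ∃ l₁ l₂, List.filter P (transform pre rest) = l₁ ++ (v, 1) :: (v, 1) :: l₂ := by
  intro rest
  induction rest with
  | nil => intro pre hv; simp at hv
  | cons y rest ih =>
    intro pre hv
    by_cases hstop : y = v ∧ y ∉ rest
    · obtain ⟨rfl, hr⟩ := hstop
      refine ⟨[], List.filter P (transform (pre ++ [y]) rest), ?_⟩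
      rw [transform, if_pos (Or.inr hr), if_pos hr]
      simp [List.filter_append, List.filter_cons, h1, h0]
    · have hv' : v ∈ rest := by
        push_neg at hstop
        rcases List.mem_cons.mp hv with h | h
        · rw [h]; exact hstop h.symm
        · exact h
      obtain ⟨l₁, l₂, he⟩ := ih (pre ++ [y]) hv'
      refine ⟨List.filter P
          ((if y ∈ pre ∨ y ∉ rest then [((y, 1) : V × Fin 2)] else []) ++
            [((y, 0) : V × Fin 2)] ++
            (if y ∉ rest then [((y, 1) : V × Fin 2)] else [])) ++ l₁, l₂, ?_⟩
      rw [transform, List.filter_append, he]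
      exact (List.append_assoc _ _ _).symm

lemma length_transform : ∀ (rest pre : List V),
    (transform pre rest).length ≤ 2 * rest.length +
      (rest.toFinset.filter (fun u => u ∈ pre ∨ rest.count u = 1)).card := by
  intro rest
  induction rest with
  | nil => intro pre; simp [transform]
  | cons y rest ih =>
    intro pre
    set Tset := (y :: rest).toFinset.filter
      (fun u => u ∈ pre ∨ (y :: rest).count u = 1) with hTset
    set T' := rest.toFinset.filter
      (fun u => u ∈ pre ++ [y] ∨ rest.count u = 1) with hT'
    have hIH : (transform (pre ++ [y]) rest).length ≤ 2 * rest.length + T'.card :=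
      ih (pre ++ [y])
    by_cases hr : y ∈ rest
    · by_cases hp : y ∈ pre
      · have hlen : (transform pre (y :: rest)).length =
            2 + (transform (pre ++ [y]) rest).length := by
          rw [transform, if_pos (Or.inl hp), if_neg (by simpa using hr)]
          simp; omega
        have hsub : T' ⊆ Tset := by
          intro u hu
          simp only [hT', Finset.mem_filter, List.mem_toFinset, List.mem_append,
            List.mem_singleton] at hu
          simp only [hTset, Finset.mem_filter, List.mem_toFinset, List.mem_cons]
          refine ⟨Or.inr hu.1, ?_⟩
          by_cases huy : u = y
          · exact Or.inl (huy ▸ hp)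
          · rcases hu.2 with (h | h) | h
            · exact Or.inl h
            · exact absurd h huy
            · refine Or.inr ?_
              rw [List.count_cons_of_ne (Ne.symm huy)]
              exact h
        have := Finset.card_le_card hsub
        simp only [List.length_cons]
        omega
      · have hlen : (transform pre (y :: rest)).length =
            1 + (transform (pre ++ [y]) rest).length := by
          rw [transform, if_neg (by simpa using ⟨hp, hr⟩), if_neg (by simpa using hr)]
          simp; omega
        have hsub : T' ⊆ insert y Tset := by
          intro u hu
          simp only [hT', Finset.mem_filter, List.mem_toFinset, List.mem_append,
            List.mem_singleton] at hu
          by_cases huy : u = y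
          · simp [huy]
          · simp only [hTset, Finset.mem_insert, Finset.mem_filter, List.mem_toFinset,
              List.mem_cons]
            refine Or.inr ⟨Or.inr hu.1, ?_⟩
            rcases hu.2 with (h | h) | h
            · exact Or.inl h
            · exact absurd h huy
            · refine Or.inr ?_
              rw [List.count_cons_of_ne (Ne.symm huy)]
              exact h
        have h1 := Finset.card_le_card hsub
        have h2 := Finset.card_insert_le y Tset
        simp only [List.length_cons]
        omega
    · have hlen : (transform pre (y :: rest)).length =
          3 + (transform (pre ++ [y]) rest).length := by
        rw [transform, if_pos (Or.inr hr), if_pos hr]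
        simp; omega
      have hyT : y ∈ Tset := by
        rw [hTset]
        exact Finset.mem_filter.mpr ⟨by simp, Or.inr (by
          simp [List.count_eq_zero_of_not_mem hr])⟩
      have hsub : T' ⊆ Tset.erase y := by
        intro u hu
        simp only [hT', Finset.mem_filter, List.mem_toFinset, List.mem_append,
          List.mem_singleton] at hu
        have huy : u ≠ y := fun hh => hr (hh ▸ hu.1)
        refine Finset.mem_erase.mpr ⟨huy, ?_⟩
        simp only [hTset, Finset.mem_filter, List.mem_toFinset, List.mem_cons]
        refine ⟨Or.inr hu.1, ?_⟩
        rcases hu.2 with (h | h) | h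
        · exact Or.inl h
        · exact absurd h huy
        · refine Or.inr ?_
          rw [List.count_cons_of_ne (Ne.symm huy)]
          exact h
      have h1 := Finset.card_le_card hsub
      have h2 : (Tset.erase y).card = Tset.card - 1 := Finset.card_erase_of_mem hyT
      have h3 : 1 ≤ Tset.card := Finset.card_pos.mpr ⟨y, hyT⟩
      simp only [List.length_cons]
      omega

/-- Two letters that occur exactly once in a representing word are adjacent. -/
lemma adj_of_count_one {G : SimpleGraph V} {w : List V} (hw : Represents G w)
    {x y : V} (hxy : x ≠ y) (hx : w.count x = 1) (hy : w.count y = 1) : G.Adj x y := by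
  refine (hw.2 x y hxy).mpr ?_
  unfold Alternates
  set p : V → Bool := fun z => decide (z = x ∨ z = y) with hp
  have hpx : p x = true := by simp [hp]
  have hpy : p y = true := by simp [hp]
  have hcx : (w.filter p).count x = 1 := by rw [List.count_filter hpx]; exact hx
  have hcy : (w.filter p).count y = 1 := by rw [List.count_filter hpy]; exact hy
  have hlen : (w.filter p).length = 2 := by
    rw [List.length_eq_countP_add_countP (p := (· == x))]
    have e1 : List.countP (· == x) (w.filter p) = 1 := hcx
    have e2 : List.countP (fun a => decide ¬(a == x) = true) (w.filter p) = 1 := by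
      rw [List.countP_congr (q := (· == y))]
      · exact hcy
      · intro a ha
        have hpa : a = x ∨ a = y := by
          have := List.of_mem_filter ha
          simpa [hp] using this
        rcases hpa with rfl | rfl
        · simp [hxy]
        · simp [Ne.symm hxy]
    omega
  obtain ⟨a, b, hfe⟩ : ∃ a b, w.filter p = [a, b] := by
    rcases hl : w.filter p with _ | ⟨a, _ | ⟨b, _ | ⟨c, l⟩⟩⟩
    · rw [hl] at hlen; simp at hlen
    · rw [hl] at hlen; simp at hlen
    · exact ⟨a, b, rfl⟩
    · rw [hl] at hlen; simp at hlen
  · rw [hfe] at hcx hcy ⊢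
    have hab : a ≠ b := by
      rintro rfl
      have hmem : a ∈ w.filter p := by rw [hfe]; simp
      have : a = x ∨ a = y := by simpa [hp] using List.of_mem_filter hmem
      rcases this with rfl | rfl
      · simp [List.count_cons] at hcx
      · simp [List.count_cons] at hcy
    exact List.isChain_pair.mpr hab

end RootedProdConstruction

theorem stmt17 [Fintype V] [DecidableEq V] (G : SimpleGraph V)
    (h : WordRepresentable G) :
    reprLen (rootedProd G (⊤ : SimpleGraph (Fin 2)) 0) ≤ 2 * reprLen G + G.cliqueNum := by
  have h10 : (1 : Fin 2) ≠ 0 := by decide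
  have h01 : (0 : Fin 2) ≠ 1 := by decide
  have hne : {n | ∃ w : List V, Represents G w ∧ w.length = n}.Nonempty := by
    obtain ⟨w, hw⟩ := h
    exact ⟨w.length, w, hw, rfl⟩
  obtain ⟨w, hw, hwl⟩ := Nat.sInf_mem hne
  -- The set of letters occurring exactly once in `w` forms a clique.
  have hScard : (w.toFinset.filter
      (fun u => u ∈ ([] : List V) ∨ w.count u = 1)).card ≤ G.cliqueNum := by
    refine SimpleGraph.IsClique.card_le_cliqueNum (tc := ?_)
    intro x hx y hy hxy
    simp only [Finset.coe_filter, Set.mem_setOf_eq, List.mem_toFinset,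
      List.not_mem_nil, false_or] at hx hy
    exact adj_of_count_one hw hxy hx.2 hy.2
  -- The transformed word represents the rooted product.
  have hrep : Represents (rootedProd G (⊤ : SimpleGraph (Fin 2)) 0) (transform [] w) := by
    constructor
    · rintro ⟨a, i⟩
      have hm := mem_transform a w [] (hw.1 a)
      rcases (by omega : i = 0 ∨ i = 1) with rfl | rfl
      · exact hm.1
      · exact hm.2
    · rintro ⟨a, i⟩ ⟨b, j⟩ hxy
      rcases (by omega : i = 0 ∨ i = 1) with rfl | rfl <;>
        rcases (by omega : j = 0 ∨ j = 1) with rfl | rfl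
      · -- both roots
        have hab : a ≠ b := fun hh => hxy (by rw [hh])
        have hAdj : (rootedProd G (⊤ : SimpleGraph (Fin 2)) 0).Adj (a, 0) (b, 0) ↔
            G.Adj a b := by
          simp [rootedProd, hab]
        rw [hAdj]
        unfold Alternates
        have hfe : List.filter
            (fun z => decide (z = ((a, 0) : V × Fin 2) ∨ z = ((b, 0) : V × Fin 2)))
              (transform [] w) =
            (List.filter (fun c => decide (c = a ∨ c = b)) w).map
              (fun c => ((c, 0) : V × Fin 2)) := by
          rw [← roots_transform (fun c => decide (c = a ∨ c = b)) w []]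
          refine List.filter_congr ?_
          rintro ⟨c, k⟩ _
          rcases (by omega : k = 0 ∨ k = 1) with rfl | rfl <;>
            simp [Prod.ext_iff, h10, h01]
        rw [hfe, List.Chain', List.isChain_map]
        have hrel : (fun (c d : V) => ((c, (0 : Fin 2))) ≠ (d, (0 : Fin 2))) =
            (fun c d => c ≠ d) := by
          funext c d
          simp [Prod.ext_iff]
        rw [hrel]
        exact hw.2 a b hab
      · -- root and pendant
        by_cases hab : a = b
        · subst hab
          refine iff_of_true (Or.inl ⟨rfl, by simp [SimpleGraph.top_adj, h01]⟩) ?_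
          unfold Alternates
          have hfe : List.filter
              (fun z => decide (z = ((a, 0) : V × Fin 2) ∨ z = ((a, 1) : V × Fin 2)))
                (transform [] w) =
              List.filter (fun z : V × Fin 2 => z.1 == a) (transform [] w) := by
            refine List.filter_congr ?_
            rintro ⟨c, k⟩ _
            rcases (by omega : k = 0 ∨ k = 1) with rfl | rfl <;>
              (simp [Prod.ext_iff, h10, h01]; try rfl)
          rw [hfe]
          exact (alt_transform a w [] (hw.1 a)).1
        · refine iff_of_false ?_ ?_
          · rintro (⟨h1, -⟩ | ⟨-, h2, -⟩)
            · exact hab h1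
            · exact h10 h2
          · intro hAlt
            obtain ⟨l₁, l₂, he⟩ := kill_transform b
              (fun z => decide (z = ((a, 0) : V × Fin 2) ∨ z = ((b, 1) : V × Fin 2)))
              (by simp) (by simp [Prod.ext_iff, (Ne.symm hab : b ≠ a), h01]) w []
              (hw.1 b)
            unfold Alternates at hAlt
            rw [he] at hAlt
            exact (List.isChain_cons_cons.mp (List.isChain_append.mp hAlt).2.1).1 rfl
      · -- pendant and root
        by_cases hab : a = b
        · subst hab
          refine iff_of_true (Or.inl ⟨rfl, by simp [SimpleGraph.top_adj, h10]⟩) ?_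
          unfold Alternates
          have hfe : List.filter
              (fun z => decide (z = ((a, 1) : V × Fin 2) ∨ z = ((a, 0) : V × Fin 2)))
                (transform [] w) =
              List.filter (fun z : V × Fin 2 => z.1 == a) (transform [] w) := by
            refine List.filter_congr ?_
            rintro ⟨c, k⟩ _
            rcases (by omega : k = 0 ∨ k = 1) with rfl | rfl <;>
              (simp [Prod.ext_iff, h10, h01]; try rfl)
          rw [hfe]
          exact (alt_transform a w [] (hw.1 a)).1
        · refine iff_of_false ?_ ?_
          · rintro (⟨h1, -⟩ | ⟨h2, -, -⟩)
            · exact hab h1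
            · exact h10 h2
          · intro hAlt
            obtain ⟨l₁, l₂, he⟩ := kill_transform a
              (fun z => decide (z = ((a, 1) : V × Fin 2) ∨ z = ((b, 0) : V × Fin 2)))
              (by simp) (by simp [Prod.ext_iff, hab, h01]) w [] (hw.1 a)
            unfold Alternates at hAlt
            rw [he] at hAlt
            exact (List.isChain_cons_cons.mp (List.isChain_append.mp hAlt).2.1).1 rfl
      · -- two pendants
        have hab : a ≠ b := fun hh => hxy (by rw [hh])
        refine iff_of_false ?_ ?_
        · rintro (⟨h1, -⟩ | ⟨h2, -, -⟩)
          · exact hab h1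
          · exact h10 h2
        · intro hAlt
          obtain ⟨l₁, l₂, he⟩ := kill_transform a
            (fun z => decide (z = ((a, 1) : V × Fin 2) ∨ z = ((b, 1) : V × Fin 2)))
            (by simp) (by simp [Prod.ext_iff, hab, h01]) w [] (hw.1 a)
          unfold Alternates at hAlt
          rw [he] at hAlt
          exact (List.isChain_cons_cons.mp (List.isChain_append.mp hAlt).2.1).1 rfl
  have hle : reprLen (rootedProd G (⊤ : SimpleGraph (Fin 2)) 0) ≤
      (transform [] w).length :=
    Nat.sInf_le ⟨transform [] w, hrep, rfl⟩
  have hlen := length_transform w ([] : List V)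
  have hG : reprLen G = w.length := hwl.symm
  rw [hG]
  omega
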